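/- For any constants $p,q,r>0$, the function $f(x,y,z) = e^{qy}/(x^p z^r)$ is strictly convex on the domain $D_f = (0,\infty)\times\mathbb{R}\times(0,\infty)$. -/
import Mathlib

open Set Real

/-- For constants `p, q, r > 0`, the function `f(x,y,z) = e^{qy} / (x^p z^r)` is
strictly convex on `(0,∞) × ℝ × (0,∞)`. -/
theorem stmt1 (p q r : ℝ) (hp : 0 < p) (hq : 0 < q) (hr : 0 < r) :
    StrictConvexOn ℝ ((Ioi (0:ℝ)) ×ˢ ((univ : Set ℝ) ×ˢ Ioi (0:ℝ)))
      (fun w : ℝ × ℝ × ℝ => Real.exp (q * w.2.1) / (w.1 ^ p * w.2.2 ^ r)) := by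
  have key : ∀ x z : ℝ, 0 < x → 0 < z → ∀ y : ℝ,
      Real.exp (q * y) / (x ^ p * z ^ r)
        = Real.exp (q * y - (Real.log x * p + Real.log z * r)) := by
    intro x z hx hz y
    rw [Real.rpow_def_of_pos hx, Real.rpow_def_of_pos hz, ← Real.exp_add, ← Real.exp_sub]
  constructor
  · exact (convex_Ioi 0).prod (convex_univ.prod (convex_Ioi 0))
  · rintro ⟨x₁, y₁, z₁⟩ ⟨hx₁, -, hz₁⟩ ⟨x₂, y₂, z₂⟩ ⟨hx₂, -, hz₂⟩ hne a b ha hb hab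
    simp only [mem_Ioi] at hx₁ hz₁ hx₂ hz₂
    simp only [Prod.smul_mk, Prod.mk_add_mk, smul_eq_mul]
    have hA : 0 < a * x₁ + b * x₂ := add_pos (mul_pos ha hx₁) (mul_pos hb hx₂)
    have hC : 0 < a * z₁ + b * z₂ := add_pos (mul_pos ha hz₁) (mul_pos hb hz₂)
    rw [key _ _ hx₁ hz₁, key _ _ hx₂ hz₂, key _ _ hA hC]
    set g₁ : ℝ := q * y₁ - (Real.log x₁ * p + Real.log z₁ * r) with hg1
    set g₂ : ℝ := q * y₂ - (Real.log x₂ * p + Real.log z₂ * r) with hg2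
    -- log inequalities
    have hlogx : a * Real.log x₁ + b * Real.log x₂ ≤ Real.log (a * x₁ + b * x₂) := by
      have := strictConcaveOn_log_Ioi.concaveOn.2 (mem_Ioi.2 hx₁) (mem_Ioi.2 hx₂)
        ha.le hb.le hab
      simpa [smul_eq_mul] using this
    have hlogz : a * Real.log z₁ + b * Real.log z₂ ≤ Real.log (a * z₁ + b * z₂) := by
      have := strictConcaveOn_log_Ioi.concaveOn.2 (mem_Ioi.2 hz₁) (mem_Ioi.2 hz₂)
        ha.le hb.le hab
      simpa [smul_eq_mul] using this
    have hglea : q * (a * y₁ + b * y₂)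
        - (Real.log (a * x₁ + b * x₂) * p + Real.log (a * z₁ + b * z₂) * r)
        ≤ a * g₁ + b * g₂ := by
      rw [hg1, hg2]
      nlinarith [mul_le_mul_of_nonneg_right hlogx hp.le,
        mul_le_mul_of_nonneg_right hlogz hr.le]
    by_cases hgg : g₁ = g₂
    · -- then x or z coords must differ
      have hxz : x₁ ≠ x₂ ∨ z₁ ≠ z₂ := by
        by_contra h
        push_neg at h
        obtain ⟨hx, hz⟩ := h
        apply hne
        have hy : y₁ = y₂ := by
          rw [hg1, hg2, hx, hz] at hgg
          have : q * y₁ = q * y₂ := by linarith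
          exact mul_left_cancel₀ hq.ne' this
        simp [hx, hy, hz]
      have hstrict : q * (a * y₁ + b * y₂)
          - (Real.log (a * x₁ + b * x₂) * p + Real.log (a * z₁ + b * z₂) * r)
          < a * g₁ + b * g₂ := by
        rcases hxz with hx | hz
        · have hsx : a * Real.log x₁ + b * Real.log x₂ < Real.log (a * x₁ + b * x₂) := by
            have := strictConcaveOn_log_Ioi.2 (mem_Ioi.2 hx₁) (mem_Ioi.2 hx₂) hx ha hb hab
            simpa [smul_eq_mul] using this
          rw [hg1, hg2]
          nlinarith [mul_lt_mul_of_pos_right hsx hp,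
            mul_le_mul_of_nonneg_right hlogz hr.le]
        · have hsz : a * Real.log z₁ + b * Real.log z₂ < Real.log (a * z₁ + b * z₂) := by
            have := strictConcaveOn_log_Ioi.2 (mem_Ioi.2 hz₁) (mem_Ioi.2 hz₂) hz ha hb hab
            simpa [smul_eq_mul] using this
          rw [hg1, hg2]
          nlinarith [mul_lt_mul_of_pos_right hsz hr,
            mul_le_mul_of_nonneg_right hlogx hp.le]
      calc Real.exp (q * (a * y₁ + b * y₂)
          - (Real.log (a * x₁ + b * x₂) * p + Real.log (a * z₁ + b * z₂) * r))
          < Real.exp (a * g₁ + b * g₂) := Real.exp_lt_exp.2 hstrict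
        _ = a * Real.exp g₁ + b * Real.exp g₂ := by
            rw [← hgg, ← add_mul, hab, one_mul, ← add_mul, hab, one_mul]
    · have hexp : Real.exp (a * g₁ + b * g₂) < a * Real.exp g₁ + b * Real.exp g₂ := by
        have := strictConvexOn_exp.2 (mem_univ g₁) (mem_univ g₂) hgg ha hb hab
        simpa [smul_eq_mul] using this
      calc Real.exp (q * (a * y₁ + b * y₂)
          - (Real.log (a * x₁ + b * x₂) * p + Real.log (a * z₁ + b * z₂) * r))
          ≤ Real.exp (a * g₁ + b * g₂) := Real.exp_le_exp.2 hglea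
        _ < a * Real.exp g₁ + b * Real.exp g₂ := hexp
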